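/- Let 0 < μ < L, κ = μ/L, and suppose x₀, x₁, x*, g₀, g₁ ∈ ℝ^n, f₀, f₁, f* ∈ ℝ satisfy the five inequalities of the gradient-descent performance estimation proof (three F_{μ,L}-interpolation inequalities with g* = 0, plus -g₀ᵀg₁ ≥ 0 and g₁ᵀ(x₀-x₁) ≥ 0). Define s₁ = -((1+√κ)²/(1+κ))(x₀ - x* - g₀/√(Lμ)) + (x₁ - x* + g₁/√(Lμ)) and s₂ = ((1-√κ)²/(1+κ))(x₀ - x* + g₀/√(Lμ)) - (x₁ - x* - g₁/√(Lμ)). Then f₁ - f* ≤ ((1-κ)/(1+κ))²(f₀ - f*) - (μ/4)(‖s₁‖²/(1+√κ) + ‖s₂‖²/(1-√κ)). -/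

import Mathlib

open RealInnerProductSpace

/-- The `F_{μ,L}` interpolation inequality between the triples `(xi, fi, gi)` and
`(xj, fj, gj)`. -/
def InterpIneq {n : ℕ} (μ L : ℝ) (xi xj : EuclideanSpace ℝ (Fin n)) (fi fj : ℝ)
    (gi gj : EuclideanSpace ℝ (Fin n)) : Prop :=
  fi ≥ fj + ⟪gj, xi - xj⟫ + 1 / (2 * (1 - μ / L)) *
    ((1 / L) * ‖gi - gj‖ ^ 2 + μ * ‖xi - xj‖ ^ 2 - (2 * μ / L) * ⟪gj - gi, xj - xi⟫)

set_option maxHeartbeats 4000000 in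
/-- Scalar certificate identity for the one-step gradient descent rate. -/
lemma keyaux (r L P00 P10 P11 Ps0 Ps1 Pss A0 A1 As B0 B1 Bs G00 G10 G11 f₀ f₁ fstar : ℝ)
    (hL : L ≠ 0) (hr : r ≠ 0) (h1r : (1:ℝ) + r ≠ 0) (h2r : (1:ℝ) - r ≠ 0)
    (h3r : (1:ℝ) + r^2 ≠ 0) :
    ((1 - r^2)/(1 + r^2))^2 * (f₀ - fstar) - (f₁ - fstar) -
      L * r^2 / 4 *
        ((((1+r)^2/(1+r^2))^2 * P00 + P11 + ((1+r)^2/(1+r^2) - 1)^2 * Pss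
          + ((1+r)^2/(1+r^2) * (L*r)⁻¹)^2 * G00 + ((L*r)⁻¹)^2 * G11
          + 2 * (-(1+r)^2/(1+r^2)) * P10
          + 2 * (-(1+r)^2/(1+r^2)) * ((1+r)^2/(1+r^2) - 1) * Ps0
          + 2 * ((1+r)^2/(1+r^2) - 1) * Ps1
          + 2 * (-(1+r)^2/(1+r^2)) * ((1+r)^2/(1+r^2) * (L*r)⁻¹) * A0
          + 2 * ((1+r)^2/(1+r^2) * (L*r)⁻¹) * A1
          + 2 * ((1+r)^2/(1+r^2) - 1) * ((1+r)^2/(1+r^2) * (L*r)⁻¹) * As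
          + 2 * (-(1+r)^2/(1+r^2)) * (L*r)⁻¹ * B0
          + 2 * (L*r)⁻¹ * B1
          + 2 * ((1+r)^2/(1+r^2) - 1) * (L*r)⁻¹ * Bs
          + 2 * ((1+r)^2/(1+r^2) * (L*r)⁻¹) * (L*r)⁻¹ * G10) / (1+r)
        + (((1-r)^2/(1+r^2))^2 * P00 + P11 + (1 - (1-r)^2/(1+r^2))^2 * Pss
          + ((1-r)^2/(1+r^2) * (L*r)⁻¹)^2 * G00 + ((L*r)⁻¹)^2 * G11
          + 2 * (-(1-r)^2/(1+r^2)) * P10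
          + 2 * ((1-r)^2/(1+r^2)) * (1 - (1-r)^2/(1+r^2)) * Ps0
          + 2 * (-(1 - (1-r)^2/(1+r^2))) * Ps1
          + 2 * ((1-r)^2/(1+r^2)) * ((1-r)^2/(1+r^2) * (L*r)⁻¹) * A0
          + 2 * (-((1-r)^2/(1+r^2) * (L*r)⁻¹)) * A1
          + 2 * (1 - (1-r)^2/(1+r^2)) * ((1-r)^2/(1+r^2) * (L*r)⁻¹) * As
          + 2 * ((1-r)^2/(1+r^2)) * (L*r)⁻¹ * B0
          + 2 * (-(L*r)⁻¹) * B1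
          + 2 * (1 - (1-r)^2/(1+r^2)) * (L*r)⁻¹ * Bs
          + 2 * ((1-r)^2/(1+r^2) * (L*r)⁻¹) * (L*r)⁻¹ * G10) / (1-r))
    = (1 - r^2)/(1 + r^2) *
        (f₀ - (f₁ + (B0 - B1) + 1 / (2 * (1 - r ^ 2)) *
          (1 / L * (G00 - G10 - (G10 - G11)) + L * r ^ 2 * (P00 - P10 - (P10 - P11))
            - 2 * r ^ 2 * (B1 - A1 - (B0 - A0)))))
    + 2*r^2*(1 - r^2)/(1 + r^2)^2 *
        (fstar - (f₀ + (As - A0) + 1 / (2 * (1 - r ^ 2)) *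
          (1 / L * (0 - (0 - G00)) + L * r ^ 2 * (Pss - Ps0 - (Ps0 - P00))
            - 2 * r ^ 2 * (A0 - 0 - (As - 0)))))
    + 2*r^2/(1 + r^2) *
        (fstar - (f₁ + (Bs - B1) + 1 / (2 * (1 - r ^ 2)) *
          (1 / L * (0 - (0 - G11)) + L * r ^ 2 * (Pss - Ps1 - (Ps1 - P11))
            - 2 * r ^ 2 * (B1 - 0 - (Bs - 0)))))
    + 2/(L*(1 + r^2)) * (-G10)
    + (B0 - B1) := by
  have h4r : (1:ℝ) - r^2 ≠ 0 := by
    intro h; apply h1r; have : (1-r)*(1+r) = 0 := by nlinarith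
    rcases mul_eq_zero.1 this with h'|h'
    · exact absurd h' h2r
    · exact h'
  field_simp
  ring

set_option maxHeartbeats 4000000 in
theorem stmt14 {n : ℕ} (μ L : ℝ) (hμ : 0 < μ) (hμL : μ < L)
    (x₀ x₁ xstar g₀ g₁ : EuclideanSpace ℝ (Fin n)) (f₀ f₁ fstar : ℝ)
    (h1 : InterpIneq μ L x₀ x₁ f₀ f₁ g₀ g₁)
    (h2 : InterpIneq μ L xstar x₀ fstar f₀ 0 g₀)
    (h3 : InterpIneq μ L xstar x₁ fstar f₁ 0 g₁)
    (h4 : -⟪g₀, g₁⟫ ≥ 0)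
    (h5 : ⟪g₁, x₀ - x₁⟫ ≥ 0)
    (κ : ℝ) (hκ : κ = μ / L)
    (s₁ s₂ : EuclideanSpace ℝ (Fin n))
    (hs₁ : s₁ = -(((1 + Real.sqrt κ) ^ 2 / (1 + κ)) •
        (x₀ - xstar - (Real.sqrt (L * μ))⁻¹ • g₀)) +
      (x₁ - xstar + (Real.sqrt (L * μ))⁻¹ • g₁))
    (hs₂ : s₂ = ((1 - Real.sqrt κ) ^ 2 / (1 + κ)) •
        (x₀ - xstar + (Real.sqrt (L * μ))⁻¹ • g₀) -
      (x₁ - xstar - (Real.sqrt (L * μ))⁻¹ • g₁)) :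
    f₁ - fstar ≤ ((1 - κ) / (1 + κ)) ^ 2 * (f₀ - fstar) -
      μ / 4 * (‖s₁‖ ^ 2 / (1 + Real.sqrt κ) + ‖s₂‖ ^ 2 / (1 - Real.sqrt κ)) := by
  have hL : 0 < L := hμ.trans hμL
  set r := Real.sqrt κ with hrdef
  have hκpos : 0 < κ := by rw [hκ]; positivity
  have hr2 : κ = r ^ 2 := (Real.sq_sqrt hκpos.le).symm
  have hrpos : 0 < r := Real.sqrt_pos.2 hκpos
  have hμr : μ = L * r ^ 2 := by rw [hκ] at hr2; field_simp at hr2; linarith [hr2]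
  have hr1 : r < 1 := by
    have h' : κ < 1 := by rw [hκ]; exact (div_lt_one hL).2 hμL
    nlinarith [hr2]
  have ht : Real.sqrt (L * μ) = L * r := by
    rw [hμr, show L * (L * r^2) = (L*r)^2 by ring, Real.sqrt_sq (by positivity)]
  rw [ht] at hs₁ hs₂
  have nsq : ∀ v : EuclideanSpace ℝ (Fin n), ‖v‖^2 = ⟪v,v⟫ :=
    fun v => (real_inner_self_eq_norm_sq v).symm
  rw [InterpIneq] at h1 h2 h3
  rw [hμr] at h1 h2 h3 ⊢
  rw [hr2] at hs₁ hs₂ ⊢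
  have e1 : L * r ^ 2 / L = r ^ 2 := by field_simp
  have e2 : 2 * (L * r ^ 2) / L = 2 * r ^ 2 := by field_simp
  rw [e1, e2] at h1 h2 h3
  simp only [nsq, hs₁, hs₂, inner_sub_left, inner_sub_right, inner_add_left, inner_add_right,
    real_inner_smul_left, real_inner_smul_right, inner_neg_left, inner_neg_right,
    inner_zero_left, inner_zero_right] at h1 h2 h3 h4 h5 ⊢
  simp only [real_inner_comm x₁ x₀, real_inner_comm xstar x₀, real_inner_comm xstar x₁,
    real_inner_comm g₀ x₀, real_inner_comm g₀ x₁, real_inner_comm g₀ xstar,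
    real_inner_comm g₁ x₀, real_inner_comm g₁ x₁, real_inner_comm g₁ xstar,
    real_inner_comm g₁ g₀] at h1 h2 h3 h4 h5 ⊢
  have key := keyaux r L ⟪x₀,x₀⟫ ⟪x₁,x₀⟫ ⟪x₁,x₁⟫ ⟪xstar,x₀⟫ ⟪xstar,x₁⟫ ⟪xstar,xstar⟫
    ⟪g₀,x₀⟫ ⟪g₀,x₁⟫ ⟪g₀,xstar⟫ ⟪g₁,x₀⟫ ⟪g₁,x₁⟫ ⟪g₁,xstar⟫ ⟪g₀,g₀⟫ ⟪g₁,g₀⟫ ⟪g₁,g₁⟫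
    f₀ f₁ fstar hL.ne' hrpos.ne' (by positivity) (by nlinarith) (by positivity)
  have hl1 : (0:ℝ) ≤ (1 - r^2)/(1 + r^2) := by
    apply div_nonneg (by nlinarith) (by positivity)
  have hl2 : (0:ℝ) ≤ 2*r^2*(1 - r^2)/(1 + r^2)^2 := by
    apply div_nonneg (by nlinarith) (by positivity)
  have hl3 : (0:ℝ) ≤ 2*r^2/(1 + r^2) := by positivity
  have hl4 : (0:ℝ) ≤ 2/(L*(1 + r^2)) := by positivity
  have hsum := add_nonneg (add_nonneg (add_nonneg (add_nonneg
    (mul_nonneg hl1 (sub_nonneg.mpr h1)) (mul_nonneg hl2 (sub_nonneg.mpr h2)))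
    (mul_nonneg hl3 (sub_nonneg.mpr h3))) (mul_nonneg hl4 h4)) h5
  rw [← key] at hsum
  rw [← sub_nonneg]
  refine hsum.trans (le_of_eq ?_)
  ring
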